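/- Constants are trapped by the resolvent: if K_m ≤ f(i) ≤ K_M for all i, then the solution u of the backward-Euler resolvent equation u(i) − Δt·H_h(i, u(i), u) = f(i) satisfies K_m ≤ u(i) ≤ K_M for all i. -/
import Mathlib


open Finset

/-- Constants are trapped by the backward-Euler resolvent: if `K_m ≤ f ≤ K_M`
pointwise, then the resolvent solution satisfies `K_m ≤ u ≤ K_M` pointwise. -/
theorem stmt_13 {S ι : Type*} [Fintype S]
    (h Δt : ℝ) (hh : 0 < h) (hΔt : 0 < Δt)
    (J : S → Finset ι) (c : ι → S → ℝ) (T : ι → S → S)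
    (hc : ∀ i, ∀ j ∈ J i, 0 ≤ c j i)
    (u f : S → ℝ) (Km KM : ℝ)
    (hu : ∀ i, u i - Δt * ∑ j ∈ J i, c j i * (Real.exp ((u (T j i) - u i) / h) - 1) = f i)
    (hf : ∀ i, Km ≤ f i ∧ f i ≤ KM) :
    ∀ i, Km ≤ u i ∧ u i ≤ KM := by
  intro i
  constructor
  · obtain ⟨i₀, -, hmax⟩ := Finset.exists_min_image Finset.univ u ⟨i, Finset.mem_univ i⟩
    have hsum : 0 ≤ ∑ j ∈ J i₀, c j i₀ * (Real.exp ((u (T j i₀) - u i₀) / h) - 1) := by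
      apply Finset.sum_nonneg
      intro j hj
      have h1 : 0 ≤ u (T j i₀) - u i₀ := by
        have := hmax (T j i₀) (Finset.mem_univ _)
        linarith
      have h2 : (1 : ℝ) ≤ Real.exp ((u (T j i₀) - u i₀) / h) := by
        rw [show (1:ℝ) = Real.exp 0 by simp]
        exact Real.exp_le_exp.mpr (div_nonneg h1 hh.le)
      exact mul_nonneg (hc i₀ j hj) (by linarith)
    have := hu i₀
    have hKm := (hf i₀).1
    have : Km ≤ u i₀ := by nlinarith [mul_nonneg hΔt.le hsum]
    linarith [hmax i (Finset.mem_univ i)]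
  · obtain ⟨i₀, -, hmax⟩ := Finset.exists_max_image Finset.univ u ⟨i, Finset.mem_univ i⟩
    have hsum : ∑ j ∈ J i₀, c j i₀ * (Real.exp ((u (T j i₀) - u i₀) / h) - 1) ≤ 0 := by
      apply Finset.sum_nonpos
      intro j hj
      have h1 : u (T j i₀) - u i₀ ≤ 0 := by
        have := hmax (T j i₀) (Finset.mem_univ _)
        linarith
      have h2 : Real.exp ((u (T j i₀) - u i₀) / h) ≤ 1 := by
        rw [show (1:ℝ) = Real.exp 0 by simp]
        exact Real.exp_le_exp.mpr (div_nonpos_of_nonpos_of_nonneg h1 hh.le)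
      exact mul_nonpos_of_nonneg_of_nonpos (hc i₀ j hj) (by linarith)
    have := hu i₀
    have hKM := (hf i₀).2
    have : u i₀ ≤ KM := by nlinarith [mul_nonpos_of_nonneg_of_nonpos hΔt.le hsum]
    linarith [hmax i (Finset.mem_univ i)]
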